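/- For all integers n ≥ 0 and k ≥ 1, the alternating degenerate power sum at even arguments satisfies T_{k,λ}(2n) = (1/2) · (2n+1)_{k,λ} + 2 · ∑_{j=1}^{k} (−1)^j · j! · (1/2)^{j+1} · S_{2,λ}(k,j) + ∑_{j=1}^{k−1} C(k,j) · (2n+1)_{k−j,λ} · ∑_{i=1}^{j} (−1)^i · i! · (1/2)^{i+1} · S_{2,λ}(j,i). -/

import Mathlib

open Finset

noncomputable section

/-- The generalized falling factorial `(x)_{n,λ} = x(x-λ)⋯(x-(n-1)λ)`. -/
def gff (lam x : ℝ) (n : ℕ) : ℝ := ∏ i ∈ Finset.range n, (x - i * lam)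

/-- The ordinary falling factorial `(x)_r = x(x-1)⋯(x-r+1)` of a real number. -/
def ff (x : ℝ) (r : ℕ) : ℝ := ∏ i ∈ Finset.range r, (x - i)

/-- The degenerate exponential `e_λ^x(t) = ∑_{n≥0} (x)_{n,λ} t^n/n!` as a formal power series. -/
def degExp (lam x : ℝ) : PowerSeries ℝ :=
  PowerSeries.mk fun n => gff lam x n / n.factorial

/-- `egfCoeff f n = a_n` when `f = ∑_{n≥0} a_n t^n/n!`. -/
def egfCoeff (f : PowerSeries ℝ) (n : ℕ) : ℝ := n.factorial * PowerSeries.coeff (R := ℝ) n f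

/-- The formal binomial power `(1+g)^a = ∑_{k≥0} (a)_k/k! · g^k`,
intended for `g` with zero constant term (so the sum is coefficientwise finite). -/
def binomPow (a : ℝ) (g : PowerSeries ℝ) : PowerSeries ℝ :=
  PowerSeries.mk fun n =>
    ∑ k ∈ Finset.range (n + 1), (ff a k / k.factorial) * PowerSeries.coeff (R := ℝ) n (g ^ k)

/-- `(2/(e_λ(t)+1))^α`, the `(-α)`-th formal binomial power of `(e_λ(t)+1)/2 = 1 + (e_λ(t)-1)/2`. -/
def eulerGF (lam a : ℝ) : PowerSeries ℝ :=
  binomPow (-a) (PowerSeries.C (R := ℝ) (1 / 2) * (degExp lam 1 - 1))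

/-- Generalized degenerate Euler-Genocchi polynomials `A^{(r)}_{n,λ}(x)`, defined by
`∑_{n≥0} A^{(r)}_{n,λ}(x) t^n/n! = 2 t^r e_λ^x(t)/(e_λ(t)+1)`. -/
def A (lam : ℝ) (r : ℕ) (x : ℝ) (n : ℕ) : ℝ :=
  egfCoeff (2 * PowerSeries.X ^ r * degExp lam x * (degExp lam 1 + 1)⁻¹) n

/-- Generalized degenerate Euler-Genocchi polynomials of order `α`, `A^{(r,α)}_{n,λ}(x)`,
defined by `∑_{n≥0} A^{(r,α)}_{n,λ}(x) t^n/n! = t^r (2/(e_λ(t)+1))^α e_λ^x(t)`. -/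
def Aa (lam a : ℝ) (r : ℕ) (x : ℝ) (n : ℕ) : ℝ :=
  egfCoeff (PowerSeries.X ^ r * eulerGF lam a * degExp lam x) n

/-- Degenerate Euler polynomials of order `α`:
`∑_{n≥0} E^{(α)}_{n,λ}(x) t^n/n! = (2/(e_λ(t)+1))^α e_λ^x(t)`. -/
def Epoly (lam a x : ℝ) (n : ℕ) : ℝ := egfCoeff (eulerGF lam a * degExp lam x) n

/-- Degenerate Euler polynomials `E_{n,λ}(x)`:
`∑_{n≥0} E_{n,λ}(x) t^n/n! = 2 e_λ^x(t)/(e_λ(t)+1)`. -/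
def E1 (lam x : ℝ) (n : ℕ) : ℝ :=
  egfCoeff (2 * degExp lam x * (degExp lam 1 + 1)⁻¹) n

/-- Degenerate Euler numbers `E_{n,λ}`: `∑_{n≥0} E_{n,λ} t^n/n! = 2/(e_λ(t)+1)`. -/
def Enum (lam : ℝ) (n : ℕ) : ℝ :=
  egfCoeff (2 * (degExp lam 1 + 1)⁻¹) n

/-- Degenerate Stirling numbers of the second kind:
`∑_{n≥k} S_{2,λ}(n,k) t^n/n! = (1/k!)(e_λ(t)-1)^k`. -/
def S2 (lam : ℝ) (n k : ℕ) : ℝ :=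
  egfCoeff (PowerSeries.C (R := ℝ) (1 / k.factorial) * (degExp lam 1 - 1) ^ k) n

/-- Alternating degenerate power sum `T_{k,λ}(n) = ∑_{i=0}^n (-1)^i (i)_{k,λ}`. -/
def T (lam : ℝ) (k n : ℕ) : ℝ := ∑ i ∈ Finset.range (n + 1), (-1 : ℝ) ^ i * gff lam i k
section TEvenAux
open PowerSeries

lemma gff_zero (lam x : ℝ) : gff lam x 0 = 1 := by simp [gff]

lemma gff_succ (lam x : ℝ) (m : ℕ) : gff lam x (m+1) = gff lam x m * (x - m * lam) :=
  Finset.prod_range_succ _ _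

lemma gff_zero_arg (lam : ℝ) (m : ℕ) (hm : m ≠ 0) : gff lam 0 m = 0 := by
  unfold gff
  exact Finset.prod_eq_zero (Finset.mem_range.2 (Nat.pos_of_ne_zero hm)) (by simp)

lemma egf_degExp (lam x : ℝ) (m : ℕ) : egfCoeff (degExp lam x) m = gff lam x m := by
  unfold egfCoeff degExp
  rw [PowerSeries.coeff_mk]
  field_simp

lemma ext_egf {f g : PowerSeries ℝ} (h : ∀ m, egfCoeff f m = egfCoeff g m) : f = g := by
  ext m
  have hm : (m.factorial : ℝ) ≠ 0 := Nat.cast_ne_zero.2 m.factorial_ne_zero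
  exact mul_left_cancel₀ hm (h m)

lemma egf_add (f g : PowerSeries ℝ) (m : ℕ) :
    egfCoeff (f + g) m = egfCoeff f m + egfCoeff g m := by
  simp [egfCoeff, mul_add]

lemma egf_Cmul (c : ℝ) (f : PowerSeries ℝ) (m : ℕ) :
    egfCoeff (PowerSeries.C (R := ℝ) c * f) m = c * egfCoeff f m := by
  simp [egfCoeff, PowerSeries.coeff_C_mul]; ring

lemma egf_mul (f g : PowerSeries ℝ) (m : ℕ) :
    egfCoeff (f * g) m
      = ∑ j ∈ Finset.range (m+1), (m.choose j : ℝ) * (egfCoeff f j * egfCoeff g (m - j)) := by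
  unfold egfCoeff
  rw [PowerSeries.coeff_mul, Finset.Nat.sum_antidiagonal_eq_sum_range_succ_mk, Finset.mul_sum]
  refine Finset.sum_congr rfl fun j hj => ?_
  have hj' : j ≤ m := Nat.lt_succ_iff.mp (Finset.mem_range.mp hj)
  have h : ((m.choose j : ℕ) : ℝ) * (j.factorial : ℝ) * ((m - j).factorial : ℝ)
      = (m.factorial : ℝ) := by
    exact_mod_cast congrArg (Nat.cast (R := ℝ)) (Nat.choose_mul_factorial_mul_factorial hj')
  rw [← h]; ring

lemma gff_add (lam x y : ℝ) (m : ℕ) : gff lam (x + y) m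
    = ∑ j ∈ Finset.range (m+1), (m.choose j : ℝ) * (gff lam x j * gff lam y (m - j)) := by
  induction m with
  | zero => simp [gff]
  | succ m ih =>
    set a : ℕ → ℝ := gff lam x
    set b : ℕ → ℝ := gff lam y
    have key : ∑ j ∈ Finset.range (m+1+1), ((m+1).choose j : ℝ) * (a j * b (m+1-j))
        = ∑ j ∈ Finset.range (m+1),
            ((m.choose j : ℝ) * (a (j+1) * b (m-j))
              + (m.choose (j+1) : ℝ) * (a (j+1) * b (m-j))) + a 0 * b (m+1) := by
      rw [Finset.sum_range_succ' (fun j => ((m+1).choose j : ℝ) * (a j * b (m+1-j)))]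
      congr 1
      · refine Finset.sum_congr rfl fun j hj => ?_
        have : (m+1).choose (j+1) = m.choose j + m.choose (j+1) := Nat.choose_succ_succ m j
        have h2 : m + 1 - (j + 1) = m - j := by omega
        rw [this, h2]
        push_cast
        ring
      · simp
    rw [gff_succ, ih, key]
    have key2 : ∑ j ∈ Finset.range (m+1), (m.choose (j+1) : ℝ) * (a (j+1) * b (m-j))
          + a 0 * b (m+1)
        = ∑ j ∈ Finset.range (m+1), (m.choose j : ℝ) * (a j * b (m+1-j)) := by
      have h3 : ∑ j ∈ Finset.range (m+1+1), (m.choose j : ℝ) * (a j * b (m+1-j))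
          = ∑ j ∈ Finset.range (m+1), (m.choose (j+1) : ℝ) * (a (j+1) * b (m+1-(j+1)))
            + (m.choose 0 : ℝ) * (a 0 * b (m+1-0)) :=
        Finset.sum_range_succ' _ _
      have h4 : ∑ j ∈ Finset.range (m+1+1), (m.choose j : ℝ) * (a j * b (m+1-j))
          = ∑ j ∈ Finset.range (m+1), (m.choose j : ℝ) * (a j * b (m+1-j)) := by
        rw [Finset.sum_range_succ]
        simp [Nat.choose_succ_self]
      rw [← h4, h3]
      have : ∀ j ∈ Finset.range (m+1), (m.choose (j+1) : ℝ) * (a (j+1) * b (m+1-(j+1)))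
          = (m.choose (j+1) : ℝ) * (a (j+1) * b (m-j)) := by
        intro j hj
        congr 3
        omega
      rw [Finset.sum_congr rfl this]
      simp [mul_comm]
    rw [Finset.sum_add_distrib, add_assoc, key2, ← Finset.sum_add_distrib, Finset.sum_mul]
    refine Finset.sum_congr rfl fun j hj => ?_
    have hj' : j ≤ m := Nat.lt_succ_iff.mp (Finset.mem_range.mp hj)
    have hb : b (m+1-j) = b (m-j) * (y - (m-j : ℕ) * lam) := by
      have h5 : m + 1 - j = (m - j) + 1 := by omega
      rw [h5]
      exact gff_succ lam y (m-j)
    have ha : a (j+1) = a j * (x - j * lam) := gff_succ lam x j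
    rw [hb, ha]
    have hc : ((m - j : ℕ) : ℝ) = (m : ℝ) - j := by
      push_cast [Nat.cast_sub hj']
      ring
    rw [hc]
    ring

lemma constCoeff_degExp (lam x : ℝ) :
    PowerSeries.constantCoeff (R := ℝ) (degExp lam x) = 1 := by
  have : PowerSeries.constantCoeff (R := ℝ) (degExp lam x) = gff lam x 0 / (Nat.factorial 0) :=
    PowerSeries.constantCoeff_mk
  rw [this, gff_zero]; norm_num

lemma PQ (lam : ℝ) : (degExp lam 1 + 1) * (degExp lam 1 + 1)⁻¹ = 1 := by
  apply PowerSeries.mul_inv_cancel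
  rw [map_add, constCoeff_degExp, map_one]
  norm_num

lemma degExp_mul (lam x y : ℝ) :
    degExp lam x * degExp lam y = degExp lam (x + y) := by
  apply ext_egf
  intro m
  rw [egf_mul, egf_degExp, gff_add]
  refine Finset.sum_congr rfl fun j hj => ?_
  rw [egf_degExp, egf_degExp]

lemma degExp_zero (lam : ℝ) : degExp lam 0 = 1 := by
  apply ext_egf
  intro m
  rw [egf_degExp]
  rcases Nat.eq_zero_or_pos m with h | h
  · subst h; simp [gff_zero, egfCoeff]
  · have hm : m ≠ 0 := Nat.pos_iff_ne_zero.mp h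
    rw [gff_zero_arg lam m hm]
    simp [egfCoeff, PowerSeries.coeff_one, hm]

lemma egf_two_mul (f : PowerSeries ℝ) (m : ℕ) :
    egfCoeff (2 * f) m = 2 * egfCoeff f m := by
  rw [two_mul, egf_add, two_mul]

lemma E1_add_one (lam x : ℝ) (m : ℕ) :
    E1 lam (x+1) m + E1 lam x m = 2 * gff lam x m := by
  unfold E1
  rw [← egf_add]
  have hs : 2 * degExp lam (x+1) * (degExp lam 1 + 1)⁻¹
      + 2 * degExp lam x * (degExp lam 1 + 1)⁻¹ = 2 * degExp lam x := by
    rw [← degExp_mul lam x 1]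
    calc 2 * (degExp lam x * degExp lam 1) * (degExp lam 1 + 1)⁻¹
          + 2 * degExp lam x * (degExp lam 1 + 1)⁻¹
        = 2 * degExp lam x * ((degExp lam 1 + 1) * (degExp lam 1 + 1)⁻¹) := by ring
      _ = 2 * degExp lam x := by rw [PQ]; ring
  rw [hs, egf_two_mul, egf_degExp]

lemma E1_zero (lam : ℝ) (m : ℕ) : E1 lam 0 m = Enum lam m := by
  unfold E1 Enum
  rw [degExp_zero, mul_one]

lemma Enum_zero (lam : ℝ) : Enum lam 0 = 1 := by
  unfold Enum egfCoeff
  rw [PowerSeries.coeff_zero_eq_constantCoeff_apply, map_mul, map_ofNat,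
    PowerSeries.constantCoeff_inv, map_add, constCoeff_degExp, map_one]
  norm_num

lemma E1_conv (lam x : ℝ) (m : ℕ) :
    E1 lam x m = ∑ j ∈ Finset.range (m+1),
      (m.choose j : ℝ) * (Enum lam j * gff lam x (m - j)) := by
  unfold E1
  have : 2 * degExp lam x * (degExp lam 1 + 1)⁻¹
      = (2 * (degExp lam 1 + 1)⁻¹) * degExp lam x := by ring
  rw [this, egf_mul]
  refine Finset.sum_congr rfl fun j hj => ?_
  rw [egf_degExp]
  rfl

lemma innerSumEnum (lam : ℝ) (j : ℕ) (hj : 1 ≤ j) :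
    ∑ i ∈ Finset.Icc 1 j,
        (-1 : ℝ) ^ i * (i.factorial : ℝ) * (1 / 2 : ℝ) ^ (i + 1) * S2 lam j i
      = (1 / 2 : ℝ) * Enum lam j := by
  set D : PowerSeries ℝ := degExp lam 1 - 1 with hD
  set v : PowerSeries ℝ := PowerSeries.C (R := ℝ) (-(1/2)) * D with hv
  -- each term equals (1/2) * egfCoeff (v^i) j
  have hterm : ∀ i : ℕ,
      (-1 : ℝ) ^ i * (i.factorial : ℝ) * (1 / 2 : ℝ) ^ (i + 1) * S2 lam j i
        = (1/2 : ℝ) * egfCoeff (v ^ i) j := by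
    intro i
    have hvi : v ^ i = PowerSeries.C (R := ℝ) ((-(1/2))^i) * D ^ i := by
      rw [hv, mul_pow, ← map_pow]
    rw [hvi, egf_Cmul]
    unfold S2
    rw [egf_Cmul]
    have hfi : (i.factorial : ℝ) ≠ 0 := Nat.cast_ne_zero.2 i.factorial_ne_zero
    field_simp
    rw [hD, neg_eq_neg_one_mul (1/2 : ℝ), mul_pow]
    ring
  -- extend to range (j+1): i = 0 term is egfCoeff 1 j = 0 since j ≥ 1
  have hzero : egfCoeff ((v : PowerSeries ℝ) ^ 0) j = 0 := by
    rw [pow_zero]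
    unfold egfCoeff
    rw [PowerSeries.coeff_one]
    simp [Nat.one_le_iff_ne_zero.mp hj]
  have hsum : ∑ i ∈ Finset.Icc 1 j,
      (-1 : ℝ) ^ i * (i.factorial : ℝ) * (1 / 2 : ℝ) ^ (i + 1) * S2 lam j i
      = (1/2 : ℝ) * egfCoeff (∑ i ∈ Finset.range (j+1), v ^ i) j := by
    have h1 : Finset.Icc 1 j = Finset.range (j+1) \ {0} := by
      ext i; simp [Finset.mem_Icc, Finset.mem_range, Nat.lt_succ_iff]; omega
    rw [h1, Finset.sum_sdiff_eq_sub (by simp)]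
    simp only [hterm]
    rw [Finset.sum_singleton, hzero]
    have hegf : egfCoeff (∑ i ∈ Finset.range (j+1), v ^ i) j
        = ∑ i ∈ Finset.range (j+1), egfCoeff (v ^ i) j := by
      unfold egfCoeff
      rw [map_sum, Finset.mul_sum]
    rw [hegf, Finset.mul_sum]
    ring
  rw [hsum]
  congr 1
  -- Now show egfCoeff (geom sum) j = Enum lam j
  set G : PowerSeries ℝ := ∑ i ∈ Finset.range (j+1), v ^ i with hG
  have hgeo : G * (v - 1) = v ^ (j+1) - 1 := geom_sum_mul v (j+1)
  have hPv : degExp lam 1 + 1 = PowerSeries.C (R := ℝ) 2 * (1 - v) := by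
    rw [hv, hD]
    have : (PowerSeries.C (R := ℝ) 2 : PowerSeries ℝ) * (PowerSeries.C (R := ℝ) (-(1/2)) * (degExp lam 1 - 1))
        = PowerSeries.C (R := ℝ) (-1) * (degExp lam 1 - 1) := by
      rw [← mul_assoc, ← map_mul]
      norm_num
    rw [mul_sub, this]
    simp only [map_neg, map_one]
    have h2 : (PowerSeries.C (R := ℝ) 2 : PowerSeries ℝ) = 2 := by simp [map_ofNat]
    rw [h2]; ring
  have hPG : (degExp lam 1 + 1) * G = PowerSeries.C (R := ℝ) 2 * (1 - v ^ (j+1)) := by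
    rw [hPv]
    have : (1 - v) * G = 1 - v ^ (j+1) := by
      have := hgeo
      linear_combination -this
    rw [mul_assoc, this]
  have hGQ : G = PowerSeries.C (R := ℝ) 2 * (1 - v ^ (j+1)) * (degExp lam 1 + 1)⁻¹ := by
    calc G = G * ((degExp lam 1 + 1) * (degExp lam 1 + 1)⁻¹) := by rw [PQ]; ring
      _ = ((degExp lam 1 + 1) * G) * (degExp lam 1 + 1)⁻¹ := by ring
      _ = PowerSeries.C (R := ℝ) 2 * (1 - v ^ (j+1)) * (degExp lam 1 + 1)⁻¹ := by rw [hPG]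
  -- coefficient of v^{j+1} * Q at j is 0
  have hvconst : PowerSeries.constantCoeff (R := ℝ) v = 0 := by
    rw [hv, hD, map_mul, map_sub, constCoeff_degExp, map_one]
    simp
  have hdvd : (PowerSeries.X : PowerSeries ℝ) ^ (j+1) ∣ v ^ (j+1) * (degExp lam 1 + 1)⁻¹ :=
    Dvd.dvd.mul_right (pow_dvd_pow_of_dvd (PowerSeries.X_dvd_iff.mpr hvconst) (j+1)) _
  have hcoeff0 : PowerSeries.coeff (R := ℝ) j (v ^ (j+1) * (degExp lam 1 + 1)⁻¹) = 0 :=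
    PowerSeries.X_pow_dvd_iff.mp hdvd j (Nat.lt_succ_self j)
  rw [hGQ]
  unfold Enum egfCoeff
  congr 1
  have h2C : (2 : PowerSeries ℝ) = PowerSeries.C (R := ℝ) 2 := by
    simp [map_ofNat]
  rw [h2C, mul_sub, mul_one, sub_mul, mul_assoc]
  rw [map_sub, PowerSeries.coeff_C_mul, PowerSeries.coeff_C_mul, hcoeff0]
  ring

lemma telesc (f : ℕ → ℝ) (n : ℕ) :
    ∑ i ∈ Finset.range (2*n+1), (-1:ℝ)^i * (f (i+1) + f i) = f (2*n+1) + f 0 := by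
  induction n with
  | zero => simp
  | succ n ih =>
    have h1 : 2*(n+1)+1 = (2*n+1) + 1 + 1 := by ring
    rw [h1, Finset.sum_range_succ, Finset.sum_range_succ, ih]
    have ho : (-1:ℝ)^(2*n+1) = -1 := Odd.neg_one_pow ⟨n, by ring⟩
    have he : (-1:ℝ)^(2*n+1+1) = 1 := Even.neg_one_pow ⟨n+1, by ring⟩
    rw [ho, he]
    have h2 : 2*n+1+1+1 = 2*(n+1)+1 := by ring
    rw [h2]
    ring

end TEvenAux

/-- equation (43) of the paper: for `n ≥ 0`, `k ≥ 1`,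
`T_{k,λ}(2n) = (1/2)(2n+1)_{k,λ} + 2 ∑_{j=1}^k (-1)^j j! (1/2)^{j+1} S_{2,λ}(k,j)
 + ∑_{j=1}^{k-1} C(k,j)(2n+1)_{k-j,λ} ∑_{i=1}^j (-1)^i i! (1/2)^{i+1} S_{2,λ}(j,i)`. -/
theorem T_even (lam : ℝ) (hlam : lam ≠ 0) (n k : ℕ) (hk : 1 ≤ k) :
    T lam k (2 * n) =
      (1 / 2 : ℝ) * gff lam (2 * (n : ℝ) + 1) k +
        2 * ∑ j ∈ Finset.Icc 1 k,
            (-1 : ℝ) ^ j * (j.factorial : ℝ) * (1 / 2 : ℝ) ^ (j + 1) * S2 lam k j +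
        ∑ j ∈ Finset.Icc 1 (k - 1),
          (k.choose j : ℝ) * gff lam (2 * (n : ℝ) + 1) (k - j) *
            ∑ i ∈ Finset.Icc 1 j,
              (-1 : ℝ) ^ i * (i.factorial : ℝ) * (1 / 2 : ℝ) ^ (i + 1) * S2 lam j i := by
  -- Step 1: T = (E1(2n+1) + Enum k)/2
  set f : ℕ → ℝ := fun i => E1 lam (i : ℝ) k with hf
  have hT2 : 2 * T lam k (2*n) = f (2*n+1) + f 0 := by
    rw [← telesc f n]
    unfold T
    rw [Finset.mul_sum]
    refine Finset.sum_congr rfl fun i hi => ?_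
    have : f (i+1) + f i = 2 * gff lam (i : ℝ) k := by
      rw [hf]
      have hc : ((i+1 : ℕ) : ℝ) = (i : ℝ) + 1 := by push_cast; ring
      simp only [hc]
      exact E1_add_one lam (i : ℝ) k
    rw [this]
    ring
  have hf0 : f 0 = Enum lam k := by
    rw [hf]; simpa using E1_zero lam k
  have hcast : ((2*n+1 : ℕ) : ℝ) = 2 * (n : ℝ) + 1 := by push_cast; ring
  have hTv : T lam k (2*n) = (E1 lam (2*(n:ℝ)+1) k + Enum lam k) / 2 := by
    simp only [hf, hcast] at hT2 hf0
    rw [hf0] at hT2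
    linarith
  rw [hTv, innerSumEnum lam k hk]
  have hrw : ∀ j ∈ Finset.Icc 1 (k-1),
      (k.choose j : ℝ) * gff lam (2*(n:ℝ)+1) (k-j) *
        (∑ i ∈ Finset.Icc 1 j, (-1:ℝ)^i * (i.factorial : ℝ) * (1/2:ℝ)^(i+1) * S2 lam j i)
      = (k.choose j : ℝ) * gff lam (2*(n:ℝ)+1) (k-j) * ((1/2 : ℝ) * Enum lam j) := by
    intro j hj
    rw [innerSumEnum lam j (Finset.mem_Icc.mp hj).1]
  rw [Finset.sum_congr rfl hrw, E1_conv]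
  obtain ⟨m, rfl⟩ : ∃ m, k = m + 1 := ⟨k-1, by omega⟩
  simp only [Nat.add_sub_cancel]
  rw [Finset.sum_range_succ'
    (fun j => (((m+1).choose j : ℕ) : ℝ) * (Enum lam j * gff lam (2*(n:ℝ)+1) (m+1-j))) (m+1)]
  rw [Finset.sum_range_succ
    (fun j => (((m+1).choose (j+1) : ℕ) : ℝ) * (Enum lam (j+1) * gff lam (2*(n:ℝ)+1) (m+1-(j+1)))) m]
  rw [← Finset.Ico_add_one_right_eq_Icc, Finset.sum_Ico_eq_sum_range]
  simp only [Nat.add_sub_cancel, Nat.choose_zero_right, Nat.choose_self, Nat.sub_self,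
    Nat.sub_zero, Nat.cast_one, Enum_zero, gff_zero, one_mul, mul_one]
  have hS : ∑ i ∈ Finset.range (m + 1 - 1), ((m+1).choose (1+i) : ℝ) *
        gff lam (2*(n:ℝ)+1) (m+1-(1+i)) * ((1/2 : ℝ) * Enum lam (1+i))
      = (1/2 : ℝ) * ∑ j ∈ Finset.range m,
        (((m+1).choose (j+1) : ℕ) : ℝ) * (Enum lam (j+1) * gff lam (2*(n:ℝ)+1) (m+1-(j+1))) := by
    rw [Finset.mul_sum]
    have hm1 : m + 1 - 1 = m := by omega
    rw [hm1]
    refine Finset.sum_congr rfl fun i hi => ?_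
    have h1i : 1 + i = i + 1 := Nat.add_comm 1 i
    rw [h1i]
    ring
  rw [show m + 1 - 1 = m from by omega] at hS
  rw [hS]
  ring
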